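/- arXiv:2206.05062 — 4 statements merged into one kernel-verified Lean document; each statement's English description precedes it below -/
import Mathlib

section
/- For all nonnegative integers n, m, p: Σ_{k=0}^{⌊n/4⌋} Σ_{l=0}^{⌊m/4⌋} (−1)^l · P(n−4k, m−4l, p) · Q(k, l, p) = Σ_{k=0}^{⌊n/2⌋} Σ_{l=0}^{⌊m/2⌋} Q(n−2k, m−2l, p) · Q(k, l, p). -/
/-- `P n m p` : number of integer partitions of `n` into exactly `m` parts
with each part at most `p`. -/
def P (n m p : ℕ) : ℕ :=
  Fintype.card {π : n.Partition // π.parts.card = m ∧ ∀ i ∈ π.parts, i ≤ p}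

/-- `Q n m p` : number of integer partitions of `n` into exactly `m` distinct parts
with each part at most `p`. -/
def Q (n m p : ℕ) : ℕ :=
  Fintype.card {π : n.Partition // π.parts.card = m ∧ π.parts.Nodup ∧ ∀ i ∈ π.parts, i ≤ p}

lemma card_split {n : ℕ} (C : n.Partition → Prop) [DecidablePred C] (a : ℕ) :
    Fintype.card {π : n.Partition // C π}
      = Fintype.card {π : n.Partition // C π ∧ a ∈ π.parts}
        + Fintype.card {π : n.Partition // C π ∧ a ∉ π.parts} := by
  classical
  simp only [Fintype.card_subtype]
  rw [← Finset.filter_filter C (fun π => a ∈ π.parts),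
      ← Finset.filter_filter C (fun π => a ∉ π.parts)]
  exact (Finset.card_filter_add_card_filter_not (s := Finset.univ.filter C)
    (p := fun π => a ∈ π.parts)).symm

lemma rP (n m p : ℕ) :
    P n m (p+1) = P n m p
      + (if p+1 ≤ n ∧ 1 ≤ m then P (n-(p+1)) (m-1) (p+1) else 0) := by
  classical
  rw [P, card_split (fun π => π.parts.card = m ∧ ∀ i ∈ π.parts, i ≤ p+1) (p+1)]
  rw [add_comm]
  congr 1
  · rw [P]
    apply Fintype.card_congr
    apply Equiv.subtypeEquivRight
    intro π
    constructor
    · rintro ⟨⟨hc, hle⟩, hno⟩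
      refine ⟨hc, fun i hi => ?_⟩
      have h1 := hle i hi
      have h2 : i ≠ p+1 := fun h => hno (h ▸ hi)
      omega
    · rintro ⟨hc, hle⟩
      exact ⟨⟨hc, fun i hi => le_trans (hle i hi) (Nat.le_succ p)⟩,
        fun hmem => by have := hle _ hmem; omega⟩
  · by_cases h : p+1 ≤ n ∧ 1 ≤ m
    · rw [if_pos h, P]
      apply Fintype.card_congr
      refine
        { toFun := fun x => ⟨⟨x.1.parts.erase (p+1), ?_, ?_⟩, ?_, ?_⟩
          invFun := fun y => ⟨⟨(p+1) ::ₘ y.1.parts, ?_, ?_⟩, ⟨?_, ?_⟩, ?_⟩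
          left_inv := ?_
          right_inv := ?_ }
      · intro i hi; exact x.1.parts_pos (Multiset.mem_of_mem_erase hi)
      · have hm : (p+1) ∈ x.1.parts := x.2.2
        have heq := Multiset.cons_erase hm
        have h2 : ((p+1) ::ₘ x.1.parts.erase (p+1)).sum = n := by rw [heq, x.1.parts_sum]
        rw [Multiset.sum_cons] at h2; omega
      · have hm : (p+1) ∈ x.1.parts := x.2.2
        rw [Multiset.card_erase_of_mem hm, x.2.1.1]; rfl
      · intro i hi
        exact x.2.1.2 i (Multiset.mem_of_mem_erase hi)
      · intro i hi
        rcases Multiset.mem_cons.1 hi with h1 | h1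
        · omega
        · exact y.1.parts_pos h1
      · rw [Multiset.sum_cons, y.1.parts_sum]; omega
      · rw [Multiset.card_cons, y.2.1]; omega
      · intro i hi
        rcases Multiset.mem_cons.1 hi with h1 | h1
        · omega
        · exact y.2.2 i h1
      · exact Multiset.mem_cons_self _ _
      · rintro ⟨⟨parts, hpos, hsum⟩, ⟨hc, hle⟩, hmem⟩
        exact Subtype.ext (Nat.Partition.ext (Multiset.cons_erase hmem))
      · rintro ⟨⟨parts, hpos, hsum⟩, hc, hle⟩
        exact Subtype.ext (Nat.Partition.ext (Multiset.erase_cons_head _ _))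
    · rw [if_neg h]
      rw [Fintype.card_eq_zero_iff]
      constructor
      rintro ⟨π, ⟨hc, hle⟩, hmem⟩
      have h1 : p+1 ≤ π.parts.sum :=
        Multiset.single_le_sum (fun x _ => Nat.zero_le x) _ hmem
      rw [π.parts_sum] at h1
      have h2 : 1 ≤ m := by
        rw [← hc]
        exact Multiset.card_pos.2 (fun h0 => by simp [h0] at hmem)
      exact h ⟨h1, h2⟩

lemma parts_eq_zero {n : ℕ} (π : n.Partition) (h : ∀ i ∈ π.parts, i ≤ 0) :
    π.parts = 0 := by
  apply Multiset.eq_zero_of_forall_notMem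
  intro i hi
  have := π.parts_pos hi
  have := h i hi
  omega

lemma P0 (n m : ℕ) : P n m 0 = if n = 0 ∧ m = 0 then 1 else 0 := by
  classical
  split_ifs with h
  · obtain ⟨rfl, rfl⟩ := h
    rw [P, Fintype.card_eq_one_iff]
    refine ⟨⟨⟨0, by simp, by simp⟩, by simp, by simp⟩, ?_⟩
    rintro ⟨π, hc, hle⟩
    apply Subtype.ext
    apply Nat.Partition.ext
    exact parts_eq_zero π hle
  · rw [P, Fintype.card_eq_zero_iff]
    constructor
    rintro ⟨π, hc, hle⟩
    have h0 := parts_eq_zero π hle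
    have hn : n = 0 := by rw [← π.parts_sum, h0]; rfl
    have hm : m = 0 := by rw [← hc, h0]; rfl
    exact h ⟨hn, hm⟩

lemma Q0 (n m : ℕ) : Q n m 0 = if n = 0 ∧ m = 0 then 1 else 0 := by
  classical
  split_ifs with h
  · obtain ⟨rfl, rfl⟩ := h
    rw [Q, Fintype.card_eq_one_iff]
    refine ⟨⟨⟨0, by simp, by simp⟩, by simp, by simp, by simp⟩, ?_⟩
    rintro ⟨π, hc, hd, hle⟩
    apply Subtype.ext
    apply Nat.Partition.ext
    exact parts_eq_zero π hle
  · rw [Q, Fintype.card_eq_zero_iff]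
    constructor
    rintro ⟨π, hc, hd, hle⟩
    have h0 := parts_eq_zero π hle
    have hn : n = 0 := by rw [← π.parts_sum, h0]; rfl
    have hm : m = 0 := by rw [← hc, h0]; rfl
    exact h ⟨hn, hm⟩

lemma rQ (n m p : ℕ) :
    Q n m (p+1) = Q n m p
      + (if p+1 ≤ n ∧ 1 ≤ m then Q (n-(p+1)) (m-1) p else 0) := by
  classical
  rw [Q, card_split (fun π => π.parts.card = m ∧ π.parts.Nodup ∧ ∀ i ∈ π.parts, i ≤ p+1) (p+1)]
  rw [add_comm]
  congr 1
  · -- without p+1 : equals Q n m p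
    rw [Q]
    apply Fintype.card_congr
    apply Equiv.subtypeEquivRight
    intro π
    constructor
    · rintro ⟨⟨hc, hd, hle⟩, hno⟩
      refine ⟨hc, hd, fun i hi => ?_⟩
      rcases Nat.lt_or_ge i (p+1) with h | h
      · omega
      · exact absurd hi (by
          have : i = p+1 := le_antisymm (hle i hi) h
          subst this; exact hno)
    · rintro ⟨hc, hd, hle⟩
      exact ⟨⟨hc, hd, fun i hi => le_trans (hle i hi) (Nat.le_succ p)⟩,
        fun hmem => by have := hle _ hmem; omega⟩
  · -- with p+1
    by_cases h : p+1 ≤ n ∧ 1 ≤ m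
    · rw [if_pos h, Q]
      apply Fintype.card_congr
      refine
        { toFun := fun x => ⟨⟨x.1.parts.erase (p+1), ?_, ?_⟩, ?_, ?_, ?_⟩
          invFun := fun y => ⟨⟨(p+1) ::ₘ y.1.parts, ?_, ?_⟩, ⟨?_, ?_, ?_⟩, ?_⟩
          left_inv := ?_
          right_inv := ?_ }
      · intro i hi; exact x.1.parts_pos (Multiset.mem_of_mem_erase hi)
      · have hm : (p+1) ∈ x.1.parts := x.2.2
        have := Multiset.cons_erase hm
        have h2 : ((p+1) ::ₘ x.1.parts.erase (p+1)).sum = n := by rw [this, x.1.parts_sum]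
        rw [Multiset.sum_cons] at h2; omega
      · have hm : (p+1) ∈ x.1.parts := x.2.2
        rw [Multiset.card_erase_of_mem hm, x.2.1.1]; rfl
      · exact x.2.1.2.1.erase _
      · intro i hi
        have hne : i ≠ p+1 ∧ i ∈ x.1.parts := (x.2.1.2.1.mem_erase_iff).1 hi
        have := x.2.1.2.2 i hne.2; omega
      · intro i hi
        rcases Multiset.mem_cons.1 hi with h1 | h1
        · omega
        · exact y.1.parts_pos h1
      · rw [Multiset.sum_cons, y.1.parts_sum]; omega
      · rw [Multiset.card_cons, y.2.1]; omega
      · rw [Multiset.nodup_cons]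
        exact ⟨fun hmem => by have := y.2.2.2 _ hmem; omega, y.2.2.1⟩
      · intro i hi
        rcases Multiset.mem_cons.1 hi with h1 | h1
        · omega
        · exact le_trans (y.2.2.2 i h1) (Nat.le_succ p)
      · exact Multiset.mem_cons_self _ _
      · rintro ⟨⟨parts, hpos, hsum⟩, ⟨hc, hd, hle⟩, hmem⟩
        apply Subtype.ext
        apply Nat.Partition.ext
        exact Multiset.cons_erase hmem
      · rintro ⟨⟨parts, hpos, hsum⟩, hc, hd, hle⟩
        apply Subtype.ext
        apply Nat.Partition.ext
        exact Multiset.erase_cons_head _ _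
    · rw [if_neg h]
      rw [Fintype.card_eq_zero_iff]
      constructor
      rintro ⟨π, ⟨hc, hd, hle⟩, hmem⟩
      have h1 : p+1 ≤ π.parts.sum :=
        Multiset.single_le_sum (fun x _ => Nat.zero_le x) _ hmem
      rw [π.parts_sum] at h1
      have h2 : 1 ≤ m := by
        rw [← hc]
        have : π.parts ≠ 0 := fun h0 => by simp [h0] at hmem
        exact Multiset.card_pos.2 this
      exact h (⟨h1, h2⟩)

noncomputable section
open PowerSeries

abbrev R2 := PowerSeries (PowerSeries ℤ)

def cf (f : R2) (n m : ℕ) : ℤ := coeff m (coeff n f)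

def mk2 (f : ℕ → ℕ → ℤ) : R2 := PowerSeries.mk fun n => PowerSeries.mk fun m => f n m

@[simp] lemma cf_mk2 (f : ℕ → ℕ → ℤ) (n m : ℕ) : cf (mk2 f) n m = f n m := by
  simp [cf, mk2]

lemma ext2 {f g : R2} (h : ∀ n m, cf f n m = cf g n m) : f = g := by
  ext n m
  exact h n m

def M (a b : ℕ) : R2 := monomial a ((monomial b) (1 : ℤ))

@[simp] lemma cf_add (f g : R2) (n m : ℕ) : cf (f + g) n m = cf f n m + cf g n m := by
  simp [cf]

@[simp] lemma cf_sub (f g : R2) (n m : ℕ) : cf (f - g) n m = cf f n m - cf g n m := by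
  simp [cf]

@[simp] lemma cf_one (n m : ℕ) : cf (1 : R2) n m = if n = 0 ∧ m = 0 then 1 else 0 := by
  simp only [cf, coeff_one]
  split_ifs with h1 h2 h3 <;> simp_all [coeff_one]

lemma coeff_mul_mono {R : Type*} [CommRing R] (f : PowerSeries R) (a n : ℕ) (c : R) :
    coeff n (f * monomial a c) = if a ≤ n then coeff (n-a) f * c else 0 := by
  rw [coeff_mul]
  by_cases h : a ≤ n
  · rw [if_pos h]
    rw [Finset.sum_eq_single_of_mem (n - a, a)
      (by rw [Finset.HasAntidiagonal.mem_antidiagonal]; omega)]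
    · rw [coeff_monomial, if_pos rfl]
    · rintro ⟨x1, x2⟩ hx hne
      rw [Finset.HasAntidiagonal.mem_antidiagonal] at hx
      rw [coeff_monomial]
      have : x2 ≠ a := by
        intro h2
        exact hne (by simp only [Prod.mk.injEq]; omega)
      rw [if_neg this, mul_zero]
  · rw [if_neg h]
    apply Finset.sum_eq_zero
    rintro ⟨x1, x2⟩ hx
    rw [Finset.HasAntidiagonal.mem_antidiagonal] at hx
    rw [coeff_monomial, if_neg (by omega), mul_zero]

lemma mono_mul_mono {R : Type*} [CommRing R] (a b : ℕ) (x y : R) :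
    monomial a x * monomial b y = monomial (a+b) (x*y) := by
  ext n
  rw [coeff_mul_mono]
  by_cases h : b ≤ n
  · rw [if_pos h, coeff_monomial, coeff_monomial]
    by_cases h2 : n - b = a
    · rw [if_pos h2, if_pos (by omega)]
    · rw [if_neg h2, if_neg (by omega), zero_mul]
  · rw [if_neg h, coeff_monomial, if_neg (by omega)]

lemma M_mul_M (a b c d : ℕ) : M a b * M c d = M (a+c) (b+d) := by
  unfold M
  rw [mono_mul_mono, mono_mul_mono, one_mul]

lemma cf_mul_M (f : R2) (a b n m : ℕ) :
    cf (f * M a b) n m = if a ≤ n ∧ b ≤ m then cf f (n-a) (m-b) else 0 := by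
  unfold cf M
  rw [coeff_mul_mono]
  by_cases h1 : a ≤ n
  · rw [if_pos h1, coeff_mul_mono]
    by_cases h2 : b ≤ m
    · rw [if_pos h2, if_pos ⟨h1, h2⟩, mul_one]
    · rw [if_neg h2, if_neg (by tauto)]
  · rw [if_neg h1, if_neg (by tauto), map_zero]

lemma cf_mul (f g : R2) (n m : ℕ) :
    cf (f * g) n m
      = ∑ k ∈ Finset.range (n+1), ∑ l ∈ Finset.range (m+1),
          cf f k l * cf g (n-k) (m-l) := by
  unfold cf
  rw [coeff_mul, map_sum, Finset.Nat.sum_antidiagonal_eq_sum_range_succ_mk]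
  apply Finset.sum_congr rfl
  intro k _
  rw [coeff_mul, Finset.Nat.sum_antidiagonal_eq_sum_range_succ_mk]

def Pgf (p : ℕ) : R2 := mk2 fun n m => (P n m p : ℤ)
def Qgf (p : ℕ) : R2 := mk2 fun n m => (Q n m p : ℤ)
def Q2gf (p : ℕ) : R2 := mk2 fun n m => if 2 ∣ n ∧ 2 ∣ m then (Q (n/2) (m/2) p : ℤ) else 0
def Q4gf (p : ℕ) : R2 :=
  mk2 fun n m => if 4 ∣ n ∧ 4 ∣ m then (-1)^(m/4) * (Q (n/4) (m/4) p : ℤ) else 0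

lemma Pgf_zero : Pgf 0 = 1 := by
  apply ext2; intro n m
  simp only [Pgf, cf_mk2, cf_one, P0]
  split_ifs <;> simp

lemma Qgf_zero : Qgf 0 = 1 := by
  apply ext2; intro n m
  simp only [Qgf, cf_mk2, cf_one, Q0]
  split_ifs <;> simp

lemma Q2gf_zero : Q2gf 0 = 1 := by
  apply ext2; intro n m
  simp only [Q2gf, cf_mk2, cf_one, Q0, Nat.cast_ite, Nat.cast_one, Nat.cast_zero]
  by_cases h3 : n = 0 ∧ m = 0
  · obtain ⟨rfl, rfl⟩ := h3; norm_num
  · rw [if_neg h3]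
    split_ifs <;> omega

lemma Q4gf_zero : Q4gf 0 = 1 := by
  apply ext2; intro n m
  simp only [Q4gf, cf_mk2, cf_one, Q0, Nat.cast_ite, Nat.cast_one, Nat.cast_zero]
  by_cases h3 : n = 0 ∧ m = 0
  · obtain ⟨rfl, rfl⟩ := h3; norm_num
  · rw [if_neg h3]
    split_ifs with h1 h2
    · exfalso; omega
    · ring
    · rfl

lemma Qgf_succ (p : ℕ) : Qgf (p+1) = Qgf p * (1 + M (p+1) 1) := by
  apply ext2; intro n m
  rw [mul_add, mul_one, cf_add, cf_mul_M]
  simp only [Qgf, cf_mk2]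
  rw [rQ n m p]
  push_cast [Nat.cast_ite]
  split_ifs <;> ring

lemma Pgf_succ (p : ℕ) : Pgf (p+1) * (1 - M (p+1) 1) = Pgf p := by
  apply ext2; intro n m
  rw [mul_sub, mul_one, cf_sub, cf_mul_M]
  simp only [Pgf, cf_mk2]
  rw [rP n m p]
  push_cast [Nat.cast_ite]
  split_ifs <;> ring

lemma Pgf_inv (p : ℕ) : Pgf p * ∏ i ∈ Finset.range p, (1 - M (i+1) 1) = 1 := by
  induction p with
  | zero => simp [Pgf_zero]
  | succ p ih =>
    have h : Pgf (p+1) * ((∏ i ∈ Finset.range p, (1 - M (i+1) 1)) * (1 - M (p+1) 1))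
        = (Pgf (p+1) * (1 - M (p+1) 1)) * ∏ i ∈ Finset.range p, (1 - M (i+1) 1) := by
      ring
    rw [Finset.prod_range_succ, h, Pgf_succ, ih]

lemma Qgf_prod (p : ℕ) : Qgf p = ∏ i ∈ Finset.range p, (1 + M (i+1) 1) := by
  induction p with
  | zero => simpa using Qgf_zero
  | succ p ih => rw [Finset.prod_range_succ, ← ih, Qgf_succ]

lemma Q2gf_succ (p : ℕ) : Q2gf (p+1) = Q2gf p * (1 + M (2*(p+1)) 2) := by
  apply ext2; intro n m
  rw [mul_add, mul_one, cf_add, cf_mul_M]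
  simp only [Q2gf, cf_mk2]
  by_cases h : 2 ∣ n ∧ 2 ∣ m
  · rw [if_pos h, if_pos h, rQ]
    push_cast [Nat.cast_ite]
    by_cases h2 : 2*(p+1) ≤ n ∧ 2 ≤ m
    · rw [if_pos (show p+1 ≤ n/2 ∧ 1 ≤ m/2 by omega), if_pos h2,
        if_pos (show 2 ∣ n - 2*(p+1) ∧ 2 ∣ m - 2 by omega)]
      have e1 : (n - 2*(p+1))/2 = n/2 - (p+1) := by omega
      have e2 : (m - 2)/2 = m/2 - 1 := by omega
      rw [e1, e2]
    · rw [if_neg (show ¬(p+1 ≤ n/2 ∧ 1 ≤ m/2) by omega), if_neg h2]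
  · rw [if_neg h, if_neg h, zero_add]
    split_ifs with h1 h2
    · exfalso; omega
    · rfl
    · rfl

lemma Q2gf_prod (p : ℕ) : Q2gf p = ∏ i ∈ Finset.range p, (1 + M (2*(i+1)) 2) := by
  induction p with
  | zero => simpa using Q2gf_zero
  | succ p ih => rw [Finset.prod_range_succ, ← ih, Q2gf_succ]

lemma neg_pow_pred (k : ℕ) (hk : 1 ≤ k) : ((-1:ℤ))^k = -(-1)^(k-1) := by
  obtain ⟨j, rfl⟩ : ∃ j, k = j+1 := ⟨k-1, by omega⟩
  simp [pow_succ]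

lemma Q4gf_succ (p : ℕ) : Q4gf (p+1) = Q4gf p * (1 - M (4*(p+1)) 4) := by
  apply ext2; intro n m
  rw [mul_sub, mul_one, cf_sub, cf_mul_M]
  simp only [Q4gf, cf_mk2]
  by_cases h : 4 ∣ n ∧ 4 ∣ m
  · rw [if_pos h, if_pos h, rQ]
    push_cast [Nat.cast_ite]
    by_cases h2 : 4*(p+1) ≤ n ∧ 4 ≤ m
    · rw [if_pos (show p+1 ≤ n/4 ∧ 1 ≤ m/4 by omega), if_pos h2,
        if_pos (show 4 ∣ n - 4*(p+1) ∧ 4 ∣ m - 4 by omega)]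
      have e1 : (n - 4*(p+1))/4 = n/4 - (p+1) := by omega
      have e2 : (m - 4)/4 = m/4 - 1 := by omega
      rw [e1, e2, neg_pow_pred (m/4) (by omega)]
      ring
    · rw [if_neg (show ¬(p+1 ≤ n/4 ∧ 1 ≤ m/4) by omega), if_neg h2]
      ring
  · rw [if_neg h, if_neg h]
    split_ifs with h1 h2
    · exfalso; omega
    · ring
    · ring

lemma Q4gf_prod (p : ℕ) : Q4gf p = ∏ i ∈ Finset.range p, (1 - M (4*(i+1)) 4) := by
  induction p with
  | zero => simpa using Q4gf_zero
  | succ p ih => rw [Finset.prod_range_succ, ← ih, Q4gf_succ]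

lemma factor (i : ℕ) :
    (1 - M (4*i) 4) = (1 - M i 1) * ((1 + M i 1) * (1 + M (2*i) 2)) := by
  have h1 : M i 1 * M i 1 = M (2*i) 2 := by
    rw [M_mul_M, show i + i = 2*i from by ring]
  have h2 : M (2*i) 2 * M (2*i) 2 = M (4*i) 4 := by
    rw [M_mul_M, show 2*i + 2*i = 4*i from by ring]
  rw [show (1 - M i 1) * ((1 + M i 1) * (1 + M (2*i) 2))
      = (1 - M i 1 * M i 1) * (1 + M (2*i) 2) + (0 : R2) from by ring, add_zero, h1,
    show (1 - M (2*i) 2) * (1 + M (2*i) 2) = 1 - M (2*i) 2 * M (2*i) 2 from by ring, h2]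

lemma main_gf (p : ℕ) : Pgf p * Q4gf p = Qgf p * Q2gf p := by
  rw [Q4gf_prod, Qgf_prod, Q2gf_prod]
  rw [Finset.prod_congr rfl (fun i _ => factor (i+1)),
    Finset.prod_mul_distrib, Finset.prod_mul_distrib, ← mul_assoc, Pgf_inv, one_mul]

lemma sum_dvd (d : ℕ) (hd : 0 < d) (f : ℕ → ℤ) (n : ℕ) :
    ∑ k ∈ Finset.range (n+1), (if d ∣ k then f k else 0)
      = ∑ k ∈ Finset.range (n/d + 1), f (d*k) := by
  induction n with
  | zero => simp
  | succ n ih =>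
    rw [Finset.sum_range_succ, ih]
    by_cases h : d ∣ (n+1)
    · rw [if_pos h, Nat.succ_div_of_dvd h,
        Finset.sum_range_succ (fun k => f (d*k)) (n/d + 1)]
      have e : d*(n/d + 1) = n+1 := by
        rw [← Nat.succ_div_of_dvd h]
        exact Nat.mul_div_cancel' h
      rw [e]
    · rw [if_neg h, Nat.succ_div_of_not_dvd h, add_zero]

theorem stmt_9 (n m p : ℕ) :
    ∑ k ∈ Finset.range (n / 4 + 1), ∑ l ∈ Finset.range (m / 4 + 1),
      (-1 : ℤ) ^ l * P (n - 4 * k) (m - 4 * l) p * Q k l p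
    = ∑ k ∈ Finset.range (n / 2 + 1), ∑ l ∈ Finset.range (m / 2 + 1),
      ((Q (n - 2 * k) (m - 2 * l) p : ℤ) * Q k l p) := by
  have key : Q4gf p * Pgf p = Q2gf p * Qgf p := by
    rw [mul_comm, main_gf, mul_comm]
  have hL : cf (Q4gf p * Pgf p) n m
      = ∑ k ∈ Finset.range (n / 4 + 1), ∑ l ∈ Finset.range (m / 4 + 1),
          (-1 : ℤ) ^ l * P (n - 4 * k) (m - 4 * l) p * Q k l p := by
    rw [cf_mul]
    simp only [Q4gf, Pgf, cf_mk2]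
    have step1 : ∀ k ∈ Finset.range (n+1),
        (∑ l ∈ Finset.range (m+1),
          (if 4 ∣ k ∧ 4 ∣ l then (-1:ℤ)^(l/4) * (Q (k/4) (l/4) p : ℤ) else 0)
            * (P (n-k) (m-l) p : ℤ))
        = if 4 ∣ k then (∑ l ∈ Finset.range (m+1),
            if 4 ∣ l then (-1:ℤ)^(l/4) * (Q (k/4) (l/4) p : ℤ) * (P (n-k) (m-l) p : ℤ)
            else 0) else 0 := by
      intro k _
      split_ifs with hk
      · apply Finset.sum_congr rfl; intro l _
        by_cases hl : 4 ∣ l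
        · rw [if_pos ⟨hk, hl⟩, if_pos hl]
        · rw [if_neg (by tauto), if_neg hl, zero_mul]
      · apply Finset.sum_eq_zero; intro l _
        rw [if_neg (by tauto), zero_mul]
    rw [Finset.sum_congr rfl step1, sum_dvd 4 (by norm_num)]
    apply Finset.sum_congr rfl; intro k _
    rw [sum_dvd 4 (by norm_num)]
    apply Finset.sum_congr rfl; intro l _
    rw [Nat.mul_div_cancel_left _ (by norm_num : 0 < 4),
      Nat.mul_div_cancel_left _ (by norm_num : 0 < 4)]
    ring
  have hR : cf (Q2gf p * Qgf p) n m
      = ∑ k ∈ Finset.range (n / 2 + 1), ∑ l ∈ Finset.range (m / 2 + 1),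
          ((Q (n - 2 * k) (m - 2 * l) p : ℤ) * Q k l p) := by
    rw [cf_mul]
    simp only [Q2gf, Qgf, cf_mk2]
    have step1 : ∀ k ∈ Finset.range (n+1),
        (∑ l ∈ Finset.range (m+1),
          (if 2 ∣ k ∧ 2 ∣ l then (Q (k/2) (l/2) p : ℤ) else 0)
            * (Q (n-k) (m-l) p : ℤ))
        = if 2 ∣ k then (∑ l ∈ Finset.range (m+1),
            if 2 ∣ l then (Q (k/2) (l/2) p : ℤ) * (Q (n-k) (m-l) p : ℤ)
            else 0) else 0 := by
      intro k _
      split_ifs with hk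
      · apply Finset.sum_congr rfl; intro l _
        by_cases hl : 2 ∣ l
        · rw [if_pos ⟨hk, hl⟩, if_pos hl]
        · rw [if_neg (by tauto), if_neg hl, zero_mul]
      · apply Finset.sum_eq_zero; intro l _
        rw [if_neg (by tauto), zero_mul]
    rw [Finset.sum_congr rfl step1, sum_dvd 2 (by norm_num)]
    apply Finset.sum_congr rfl; intro k _
    rw [sum_dvd 2 (by norm_num)]
    apply Finset.sum_congr rfl; intro l _
    rw [Nat.mul_div_cancel_left _ (by norm_num : 0 < 2),
      Nat.mul_div_cancel_left _ (by norm_num : 0 < 2)]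
    ring
  rw [← hL, ← hR, key]
end
end

section
/- For all nonnegative integers n and m, the following identity holds in ℚ(q): Σ_{k=0}^{n} (−1)^k · q^{C(k,2)} · [m+n−k choose m]_q · [m+1 choose k]_q = 1 if n = 0, and = 0 if n > 0. -/
/-- The Gaussian (q-)binomial coefficient `[a choose b]` with parameter `x`,
`∏_{j=1}^{b} (1 - x^{a-b+j})/(1 - x^j)`, an element of `ℚ(q)` when `x = q`;
it is zero when `b > a`. -/
noncomputable def qbinom (x : RatFunc ℚ) (a b : ℕ) : RatFunc ℚ :=
  if b ≤ a then ∏ j ∈ Finset.range b, (1 - x ^ (a - b + j + 1)) / (1 - x ^ (j + 1)) else 0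

/-- The indeterminate `q` of the field of rational functions `ℚ(q)`. -/
noncomputable def q : RatFunc ℚ := RatFunc.X

noncomputable def qfact (n : ℕ) : RatFunc ℚ := ∏ j ∈ Finset.range n, (1 - q ^ (j + 1))

lemma one_sub_q_pow_ne_zero (j : ℕ) : (1 : RatFunc ℚ) - q ^ (j + 1) ≠ 0 := by
  intro h
  have h1 : (q : RatFunc ℚ) ^ (j+1) = 1 := (sub_eq_zero.mp h).symm
  rw [q, ← RatFunc.algebraMap_X (K := ℚ), ← map_pow, ← map_one (algebraMap (Polynomial ℚ) (RatFunc ℚ))] at h1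
  have h2 := RatFunc.algebraMap_injective ℚ h1
  have h3 := congrArg Polynomial.natDegree h2
  simp [Polynomial.natDegree_X_pow] at h3

lemma qfact_ne_zero (n : ℕ) : qfact n ≠ 0 :=
  Finset.prod_ne_zero_iff.mpr fun j _ => one_sub_q_pow_ne_zero j

lemma qfact_succ (n : ℕ) : qfact (n + 1) = qfact n * (1 - q ^ (n + 1)) :=
  Finset.prod_range_succ _ _

lemma qbinom_eq (b c : ℕ) : qbinom q (b + c) b = qfact (b + c) / (qfact b * qfact c) := by
  rw [qbinom, if_pos (Nat.le_add_right b c)]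
  have h1 : qfact (b + c) = qfact c * ∏ j ∈ Finset.range b, (1 - q ^ (c + j + 1)) := by
    rw [add_comm b c, qfact, Finset.prod_range_add]
    simp only [qfact, ← add_assoc]
  rw [Finset.prod_div_distrib]
  simp only [Nat.add_sub_cancel_left]
  rw [h1, show (∏ j ∈ Finset.range b, (1 - q ^ (j + 1))) = qfact b from rfl]
  rw [div_eq_div_iff (qfact_ne_zero b) (mul_ne_zero (qfact_ne_zero b) (qfact_ne_zero c))]
  ring

lemma qbinom_zero_right (a : ℕ) : qbinom q a 0 = 1 := by
  rw [qbinom, if_pos (Nat.zero_le a)]; simp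

lemma qfact_zero : qfact 0 = 1 := by simp [qfact]

lemma qbinom_self (a : ℕ) : qbinom q a a = 1 := by
  have h := qbinom_eq a 0
  rw [add_zero, qfact_zero, mul_one, div_self (qfact_ne_zero a)] at h
  exact h

lemma qbinom_eq_zero {a b : ℕ} (h : a < b) : qbinom q a b = 0 := by
  rw [qbinom, if_neg (by omega)]

/-- Pascal rule A -/
lemma ruleA (a b : ℕ) :
    qbinom q (a + 1) (b + 1) = qbinom q a b + q ^ (b + 1) * qbinom q a (b + 1) := by
  rcases le_or_gt b a with h | h
  · obtain ⟨c, rfl⟩ := Nat.exists_eq_add_of_le h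
    rcases c with _ | c
    · simp [qbinom_self, qbinom_eq_zero]
    · have e1 : qbinom q (b + (c+1) + 1) (b + 1) = qfact ((b+1) + (c+1)) / (qfact (b+1) * qfact (c+1)) := by
        rw [← qbinom_eq]; ring_nf
      have e2 : qbinom q (b + (c+1)) b = qfact (b + (c+1)) / (qfact b * qfact (c+1)) := qbinom_eq _ _
      have e3 : qbinom q (b + (c+1)) (b + 1) = qfact ((b+1) + c) / (qfact (b+1) * qfact c) := by
        rw [← qbinom_eq]; ring_nf
      rw [e1, e2, e3]
      have hb := qfact_succ b
      have hc := qfact_succ c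
      have hbc : qfact ((b+1)+(c+1)) = qfact ((b+1)+c) * (1 - q ^ (b+c+2)) := by
        rw [show (b+1)+(c+1) = ((b+1)+c)+1 by ring, qfact_succ]; ring_nf
      have hbc2 : qfact (b+(c+1)) = qfact ((b+1)+c) := by ring_nf
      rw [hbc, hbc2, hb, hc]
      have n1 := qfact_ne_zero b
      have n2 := qfact_ne_zero c
      have n3 := one_sub_q_pow_ne_zero b
      have n4 := one_sub_q_pow_ne_zero c
      have n5 := qfact_ne_zero (b+1+c)
      field_simp
      ring
  · rw [qbinom_eq_zero (by omega), qbinom_eq_zero h, qbinom_eq_zero (by omega)]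
    ring

/-- Pascal rule B -/
lemma ruleB (b c : ℕ) :
    qbinom q (b + c + 1) (b + 1) = qbinom q (b + c) (b + 1) + q ^ c * qbinom q (b + c) b := by
  rcases c with _ | c
  · simp [qbinom_self, qbinom_eq_zero]
  · have e1 : qbinom q (b + (c+1) + 1) (b + 1) = qfact ((b+1) + (c+1)) / (qfact (b+1) * qfact (c+1)) := by
      rw [← qbinom_eq]; ring_nf
    have e2 : qbinom q (b + (c+1)) (b + 1) = qfact ((b+1) + c) / (qfact (b+1) * qfact c) := by
      rw [← qbinom_eq]; ring_nf
    have e3 : qbinom q (b + (c+1)) b = qfact (b + (c+1)) / (qfact b * qfact (c+1)) := qbinom_eq _ _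
    rw [e1, e2, e3]
    have hb := qfact_succ b
    have hc := qfact_succ c
    have hbc : qfact ((b+1)+(c+1)) = qfact ((b+1)+c) * (1 - q ^ (b+c+2)) := by
      rw [show (b+1)+(c+1) = ((b+1)+c)+1 by ring, qfact_succ]; ring_nf
    have hbc2 : qfact (b+(c+1)) = qfact ((b+1)+c) := by ring_nf
    rw [hbc, hbc2, hb, hc]
    have n1 := qfact_ne_zero b
    have n2 := qfact_ne_zero c
    have n3 := one_sub_q_pow_ne_zero b
    have n4 := one_sub_q_pow_ne_zero c
    have n5 := qfact_ne_zero (b+1+c)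
    field_simp
    ring

lemma key (n : ℕ) : ∀ m : ℕ,
    ∑ k ∈ Finset.range (n + 1 + 1),
      (-1 : RatFunc ℚ) ^ k * q ^ Nat.choose k 2 * qbinom q (m + (n + 1) - k) m * qbinom q (m + 1) k
    = 0 := by
  intro m
  induction m with
  | zero =>
      rw [Finset.sum_range_succ', Finset.sum_range_succ']
      have hz : ∀ k ∈ Finset.range n,
          (-1 : RatFunc ℚ) ^ (k+1+1) * q ^ Nat.choose (k+1+1) 2 *
            qbinom q (0 + (n + 1) - (k+1+1)) 0 * qbinom q (0 + 1) (k+1+1) = 0 := by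
        intro k _
        rw [qbinom_eq_zero (show 0 + 1 < k + 1 + 1 by omega)]
        ring
      rw [Finset.sum_eq_zero hz]
      simp [qbinom_zero_right, qbinom_self]
  | succ m ih =>
      -- inductive step
      have hsplit : ∀ k ∈ Finset.range (n + 1 + 1),
          (-1 : RatFunc ℚ) ^ k * q ^ Nat.choose k 2 * qbinom q (m + 1 + (n + 1) - k) (m + 1) *
              qbinom q (m + 1 + 1) k
          = ((-1 : RatFunc ℚ) ^ k * q ^ Nat.choose k 2 * qbinom q (m + 1 + (n + 1) - k) (m + 1) *
              qbinom q (m + 1) k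
            + (-1 : RatFunc ℚ) ^ k * q ^ Nat.choose k 2 * qbinom q (m + 1 + (n + 1) - k) (m + 1) *
              (qbinom q (m + 1 + 1) k - qbinom q (m + 1) k)) := by
        intro k _; ring
      rw [Finset.sum_congr rfl hsplit, Finset.sum_add_distrib]
      have hD : (∑ k ∈ Finset.range (n + 1 + 1),
            (-1 : RatFunc ℚ) ^ k * q ^ Nat.choose k 2 * qbinom q (m + 1 + (n + 1) - k) (m + 1) *
              (qbinom q (m + 1 + 1) k - qbinom q (m + 1) k))
          = - ∑ k ∈ Finset.range (n + 1 + 1),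
            (-1 : RatFunc ℚ) ^ k * q ^ Nat.choose k 2 * q ^ (m + 1) *
              qbinom q (m + (n + 1) - k) (m + 1) * qbinom q (m + 1) k := by
        rw [Finset.sum_range_succ']
        have hd0 : (-1 : RatFunc ℚ) ^ 0 * q ^ Nat.choose 0 2 *
            qbinom q (m + 1 + (n + 1) - 0) (m + 1) *
            (qbinom q (m + 1 + 1) 0 - qbinom q (m + 1) 0) = 0 := by
          rw [qbinom_zero_right, qbinom_zero_right]; ring
        have hterm : ∀ k ∈ Finset.range (n + 1),
            (-1 : RatFunc ℚ) ^ (k + 1) * q ^ Nat.choose (k + 1) 2 *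
              qbinom q (m + 1 + (n + 1) - (k + 1)) (m + 1) *
              (qbinom q (m + 1 + 1) (k + 1) - qbinom q (m + 1) (k + 1))
            = - ((-1 : RatFunc ℚ) ^ k * q ^ Nat.choose k 2 * q ^ (m + 1) *
              qbinom q (m + (n + 1) - k) (m + 1) * qbinom q (m + 1) k) := by
          intro k hk
          have hkN : k < n + 1 := Finset.mem_range.mp hk
          have hidx : m + 1 + (n + 1) - (k + 1) = m + (n + 1) - k := by omega
          rw [hidx]
          by_cases hkm : k ≤ m + 1
          · obtain ⟨c, hc⟩ := Nat.exists_eq_add_of_le hkm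
            have hB : qbinom q (m + 1 + 1) (k + 1)
                = qbinom q (m + 1) (k + 1) + q ^ c * qbinom q (m + 1) k := by
              have h := ruleB k c
              rw [← hc] at h
              exact h
            rw [hB]
            have hch : Nat.choose (k + 1) 2 + c = Nat.choose k 2 + (m + 1) := by
              have h2 : Nat.choose (k + 1) 2 = Nat.choose k 1 + Nat.choose k 2 :=
                Nat.choose_succ_succ k 1
              rw [Nat.choose_one_right] at h2
              omega
            have hpow : q ^ Nat.choose (k + 1) 2 * q ^ c
                = q ^ Nat.choose k 2 * q ^ (m + 1) := by
              rw [← pow_add, ← pow_add, hch]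
            calc (-1 : RatFunc ℚ) ^ (k + 1) * q ^ Nat.choose (k + 1) 2 *
                  qbinom q (m + (n + 1) - k) (m + 1) *
                  (qbinom q (m + 1) (k + 1) + q ^ c * qbinom q (m + 1) k -
                    qbinom q (m + 1) (k + 1))
                = -((-1 : RatFunc ℚ) ^ k * (q ^ Nat.choose (k + 1) 2 * q ^ c) *
                    qbinom q (m + (n + 1) - k) (m + 1) * qbinom q (m + 1) k) := by
                  rw [pow_succ]; ring
              _ = _ := by rw [hpow]; ring
          · rw [qbinom_eq_zero (show m + 1 < k + 1 by omega),
              qbinom_eq_zero (show m + 1 + 1 < k + 1 by omega),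
              qbinom_eq_zero (show m + 1 < k by omega)]
            ring
        rw [Finset.sum_congr rfl hterm, hd0, add_zero, Finset.sum_neg_distrib,
          Finset.sum_range_succ _ (n + 1)]
        rw [show m + (n + 1) - (n + 1) = m by omega,
          qbinom_eq_zero (show m < m + 1 by omega)]
        ring
      rw [hD, ← sub_eq_add_neg, ← Finset.sum_sub_distrib]
      have hfin : ∀ k ∈ Finset.range (n + 1 + 1),
          ((-1 : RatFunc ℚ) ^ k * q ^ Nat.choose k 2 * qbinom q (m + 1 + (n + 1) - k) (m + 1) *
              qbinom q (m + 1) k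
            - (-1 : RatFunc ℚ) ^ k * q ^ Nat.choose k 2 * q ^ (m + 1) *
              qbinom q (m + (n + 1) - k) (m + 1) * qbinom q (m + 1) k)
          = (-1 : RatFunc ℚ) ^ k * q ^ Nat.choose k 2 * qbinom q (m + (n + 1) - k) m *
              qbinom q (m + 1) k := by
        intro k hk
        have hkN : k ≤ n + 1 := Nat.lt_succ_iff.mp (Finset.mem_range.mp hk)
        have hidx : m + 1 + (n + 1) - k = (m + (n + 1) - k) + 1 := by omega
        rw [hidx, ruleA (m + (n + 1) - k) m]
        ring
      rw [Finset.sum_congr rfl hfin]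
      exact ih

theorem stmt_11 (n m : ℕ) :
    ∑ k ∈ Finset.range (n + 1),
      (-1 : RatFunc ℚ) ^ k * q ^ Nat.choose k 2 * qbinom q (m + n - k) m * qbinom q (m + 1) k
    = if n = 0 then 1 else 0 := by
  rcases n with _ | n
  · rw [if_pos rfl, Finset.sum_range_one]
    simp [qbinom_self, qbinom_zero_right]
  · rw [if_neg (Nat.succ_ne_zero n)]
    exact key n m
end

section
/- For all nonnegative integers n and m, the following identity holds in ℚ(q): Σ_{k=0}^{⌊n/4⌋} q^{C(n−4k,2)} · [m+1 choose n−4k]_q · [m+k choose m]_{q^4} = Σ_{k=0}^{⌊n/2⌋} (−1)^k · [m+n−2k choose m]_q · [m+k choose m]_{q^2}. -/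
namespace Stmt16

abbrev K := RatFunc ℚ

def Good (x : K) : Prop := ∀ j : ℕ, 1 ≤ j → x ^ j ≠ 1

lemma q_pow_ne_one {j : ℕ} (hj : 1 ≤ j) : (q : K) ^ j ≠ 1 := by
  intro h
  have h2 : (algebraMap (Polynomial ℚ) (RatFunc ℚ)) (Polynomial.X ^ j) =
      (algebraMap (Polynomial ℚ) (RatFunc ℚ)) 1 := by
    rw [map_pow, map_one, ← RatFunc.X]
    exact h
  have h3 : (Polynomial.X : Polynomial ℚ) ^ j = 1 :=
    IsFractionRing.injective (Polynomial ℚ) (RatFunc ℚ) h2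
  have := congrArg Polynomial.natDegree h3
  rw [Polynomial.natDegree_X_pow, Polynomial.natDegree_one] at this
  omega

lemma good_q : Good q := fun _ hj => q_pow_ne_one hj

lemma good_q_pow (b : ℕ) (hb : 1 ≤ b) : Good ((q : K) ^ b) := by
  intro j hj
  rw [← pow_mul]
  exact q_pow_ne_one (Nat.one_le_iff_ne_zero.2 (by positivity))

lemma qbinom_of_le {x : K} {a b : ℕ} (h : b ≤ a) :
    qbinom x a b = (∏ j ∈ Finset.range b, (1 - x ^ (a - b + j + 1))) /
      (∏ j ∈ Finset.range b, (1 - x ^ (j + 1))) := by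
  rw [qbinom, if_pos h, Finset.prod_div_distrib]

lemma denom_ne_zero {x : K} (hx : Good x) (b : ℕ) :
    (∏ j ∈ Finset.range b, (1 - x ^ (j + 1))) ≠ 0 := by
  apply Finset.prod_ne_zero_iff.2
  intro j _
  intro h
  exact hx (j+1) (by omega) (by linear_combination -h)

lemma qbinom_self {x : K} (hx : Good x) (a : ℕ) : qbinom x a a = 1 := by
  rw [qbinom_of_le le_rfl]
  simp only [Nat.sub_self, Nat.zero_add]
  exact div_self (denom_ne_zero hx a)

lemma qbinom_zero_right (x : K) (a : ℕ) : qbinom x a 0 = 1 := by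
  simp [qbinom]

lemma qbinom_of_lt {x : K} {a b : ℕ} (h : a < b) : qbinom x a b = 0 := by
  rw [qbinom, if_neg (by omega)]

section pascal
variable {x : K} (hx : Good x) {a b : ℕ}

private lemma e1aux (hb1 : b + 1 ≤ a) :
    qbinom x (a+1) (b+1) = ((∏ j ∈ Finset.range b, (1 - x ^ (a - b + j + 1)))
      * (1 - x ^ (b+1) * x ^ (a-b))) /
      ((∏ j ∈ Finset.range b, (1 - x ^ (j + 1))) * (1 - x ^ (b+1))) := by
  rw [qbinom_of_le (by omega)]
  congr 1
  · have : ∀ j ∈ Finset.range (b+1), (1 - x ^ (a + 1 - (b+1) + j + 1)) =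
        (1 - x ^ (a - b + j + 1)) := by
      intro j _; congr 2; omega
    rw [Finset.prod_congr rfl this, Finset.prod_range_succ]
    congr 2
    rw [← pow_add]; congr 1; omega
  · rw [Finset.prod_range_succ]

private lemma e3aux (hb1 : b + 1 ≤ a) :
    qbinom x a (b+1) = ((1 - x ^ (a-b)) * (∏ j ∈ Finset.range b, (1 - x ^ (a - b + j + 1)))) /
      ((∏ j ∈ Finset.range b, (1 - x ^ (j + 1))) * (1 - x ^ (b+1))) := by
  rw [qbinom_of_le hb1]
  congr 1
  · rw [Finset.prod_range_succ', mul_comm]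
    congr 1
    · congr 2; omega
    · apply Finset.prod_congr rfl; intro j _; congr 2; omega
  · rw [Finset.prod_range_succ]

include hx in
lemma qbinom_pascal (h : b ≤ a) :
    qbinom x (a+1) (b+1) = qbinom x a b + x ^ (b+1) * qbinom x a (b+1) := by
  rcases eq_or_lt_of_le h with rfl | hlt
  · rw [qbinom_self hx, qbinom_self hx, qbinom_of_lt (by omega)]
    ring
  · have hb1 : b + 1 ≤ a := hlt
    rw [e1aux hb1, e3aux hb1, qbinom_of_le h]
    have hD0 : (∏ j ∈ Finset.range b, (1 - x ^ (j + 1))) ≠ 0 := denom_ne_zero hx b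
    have hb0 : (1 - x ^ (b+1)) ≠ 0 := by
      intro hcon; exact hx (b+1) (by omega) (by linear_combination -hcon)
    field_simp
    ring

include hx in
lemma qbinom_pascal' (h : b ≤ a) :
    qbinom x (a+1) (b+1) = x ^ (a - b) * qbinom x a b + qbinom x a (b+1) := by
  rcases eq_or_lt_of_le h with rfl | hlt
  · rw [qbinom_self hx, qbinom_self hx, qbinom_of_lt (by omega)]
    simp
  · have hb1 : b + 1 ≤ a := hlt
    rw [e1aux hb1, e3aux hb1, qbinom_of_le h]
    have hD0 : (∏ j ∈ Finset.range b, (1 - x ^ (j + 1))) ≠ 0 := denom_ne_zero hx b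
    have hb0 : (1 - x ^ (b+1)) ≠ 0 := by
      intro hcon; exact hx (b+1) (by omega) (by linear_combination -hcon)
    field_simp
    ring

end pascal

open PowerSeries

noncomputable def Sser (x s : K) (d m : ℕ) : PowerSeries K :=
  PowerSeries.mk fun k => if d ∣ k then s ^ (k / d) * qbinom x (m + k / d) m else 0

lemma coeff_one_sub_C_mul_X_pow (c : K) (d : ℕ) (f : PowerSeries K) (n : ℕ) :
    (PowerSeries.coeff n) ((1 - PowerSeries.C c * X ^ d) * f)
      = (PowerSeries.coeff n) f - c * (if d ≤ n then (PowerSeries.coeff (n - d)) f else 0) := by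
  rw [sub_mul, one_mul, map_sub, mul_assoc, PowerSeries.coeff_C_mul,
    PowerSeries.coeff_X_pow_mul']

lemma Sser_step {x : K} (hx : Good x) (s : K) (d m : ℕ) (hd : 0 < d) :
    (1 - PowerSeries.C (s * x ^ (m+1)) * X ^ d) * Sser x s d (m+1) = Sser x s d m := by
  apply PowerSeries.ext
  intro n
  rw [coeff_one_sub_C_mul_X_pow]
  simp only [Sser, PowerSeries.coeff_mk]
  by_cases hdn : d ∣ n
  · obtain ⟨t, rfl⟩ := hdn
    rcases Nat.eq_zero_or_pos t with rfl | htpos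
    · simp only [Nat.mul_zero]
      rw [if_pos (dvd_zero d), if_neg (show ¬ d ≤ 0 by omega)]
      simp [qbinom_self hx]
    · have hdle : d ≤ d * t := Nat.le_mul_of_pos_right d htpos
      have e1 : d * t / d = t := Nat.mul_div_cancel_left t hd
      have e2 : d * t - d = d * (t - 1) := by rw [Nat.mul_sub_one]
      have hc : d ∣ d * t - d := ⟨t - 1, e2⟩
      have e3 : (d * t - d) / d = t - 1 := by rw [e2, Nat.mul_div_cancel_left _ hd]
      rw [if_pos ⟨t, rfl⟩, if_pos hdle, if_pos hc, e1, e3]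
      have hpas : qbinom x (m + t + 1) (m + 1) =
          qbinom x (m + t) m + x ^ (m + 1) * qbinom x (m + t) (m + 1) :=
        qbinom_pascal hx (by omega)
      have hidx : m + 1 + t = m + t + 1 := by omega
      have hidx2 : m + 1 + (t - 1) = m + t := by omega
      rw [hidx, hidx2, hpas]
      have hst : s ^ t = s * s ^ (t - 1) := by
        rw [← pow_succ']; congr 1; omega
      rw [hst]
      split_ifs with hdd
      · ring
      · exact absurd ⟨t, by ring⟩ hdd
  · rw [if_neg hdn, if_neg hdn]
    rcases le_or_gt d n with hdle | hlt
    · rw [if_pos hdle, if_neg (fun hc : d ∣ (n - d) => hdn (by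
        have := Nat.dvd_add hc (dvd_refl d)
        rwa [Nat.sub_add_cancel hdle] at this))]
      ring
    · rw [if_neg (by omega)]; ring

lemma Sser_base {x : K} (hx : Good x) (s : K) (d : ℕ) (hd : 0 < d) :
    (1 - PowerSeries.C (s * x ^ 0) * X ^ d) * Sser x s d 0 = 1 := by
  apply PowerSeries.ext
  intro n
  rw [coeff_one_sub_C_mul_X_pow]
  simp only [Sser, PowerSeries.coeff_mk, pow_zero, mul_one, Nat.zero_add]
  by_cases hdn : d ∣ n
  · obtain ⟨t, rfl⟩ := hdn
    rcases Nat.eq_zero_or_pos t with rfl | htpos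
    · simp only [Nat.mul_zero]
      rw [if_pos (dvd_zero d), if_neg (show ¬ d ≤ 0 by omega)]
      simp [qbinom_zero_right]
    · have hdle : d ≤ d * t := Nat.le_mul_of_pos_right d htpos
      have e1 : d * t / d = t := Nat.mul_div_cancel_left t hd
      have e2 : d * t - d = d * (t - 1) := by rw [Nat.mul_sub_one]
      have hc : d ∣ d * t - d := ⟨t - 1, e2⟩
      have e3 : (d * t - d) / d = t - 1 := by rw [e2, Nat.mul_div_cancel_left _ hd]
      rw [if_pos ⟨t, rfl⟩, if_pos hdle, if_pos hc, e1, e3,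
        PowerSeries.coeff_one, if_neg (show ¬ d * t = 0 by positivity)]
      simp only [qbinom_zero_right]
      have hst : s ^ t = s * s ^ (t - 1) := by
        rw [← pow_succ']; congr 1; omega
      rw [hst]; ring
  · have hn0 : n ≠ 0 := fun h => hdn (h ▸ dvd_zero d)
    rw [if_neg hdn, PowerSeries.coeff_one, if_neg hn0]
    rcases le_or_gt d n with hdle | hlt
    · rw [if_pos hdle, if_neg (fun hc : d ∣ (n - d) => hdn (by
        have := Nat.dvd_add hc (dvd_refl d)
        rwa [Nat.sub_add_cancel hdle] at this))]
      ring
    · rw [if_neg (by omega)]; ring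

lemma Sser_inv {x : K} (hx : Good x) (s : K) (d : ℕ) (hd : 0 < d) (m : ℕ) :
    (∏ i ∈ Finset.range (m+1), (1 - PowerSeries.C (s * x ^ i) * X ^ d)) * Sser x s d m = 1 := by
  induction m with
  | zero => simpa using Sser_base hx s d hd
  | succ m ih =>
      rw [Finset.prod_range_succ, mul_assoc, Sser_step hx s d m hd]
      exact ih

/-- The q-binomial theorem: `∏_{i=0}^m (1 + q^i X) = Σ_j q^(C(j,2)) [m+1 choose j] X^j`. -/
lemma Aser (m : ℕ) :
    (∏ i ∈ Finset.range (m+1), (1 - PowerSeries.C (-(q ^ i)) * X ^ (1:ℕ)))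
      = PowerSeries.mk (fun j => q ^ (j.choose 2) * qbinom q (m+1) j) := by
  induction m with
  | zero =>
      apply PowerSeries.ext
      intro n
      rw [Finset.prod_range_one, map_sub, PowerSeries.coeff_one, PowerSeries.coeff_C_mul,
        PowerSeries.coeff_X_pow, PowerSeries.coeff_mk]
      match n with
      | 0 => simp [qbinom_zero_right]
      | 1 => simp [qbinom_self good_q]
      | (n+2) =>
          rw [if_neg (by omega), if_neg (by omega), qbinom_of_lt (by omega)]
          ring
  | succ m ih =>
      rw [Finset.prod_range_succ, ih, mul_comm]
      apply PowerSeries.ext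
      intro n
      rw [coeff_one_sub_C_mul_X_pow, PowerSeries.coeff_mk, PowerSeries.coeff_mk]
      match n with
      | 0 =>
          rw [if_neg (by omega)]
          simp [qbinom_zero_right]
      | (b+1) =>
          rw [if_pos (by omega), PowerSeries.coeff_mk]
          simp only [Nat.add_sub_cancel]
          rcases le_or_gt b (m+1) with hble | hbgt
          · rw [qbinom_pascal' good_q hble]
            have h2 : (b+1).choose 2 = b.choose 1 + b.choose 2 := Nat.choose_succ_succ b 1
            rw [Nat.choose_one_right] at h2
            have hexp : (q:K) ^ ((b+1).choose 2) * q ^ (m + 1 - b)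
                = q ^ (m+1) * q ^ (b.choose 2) := by
              rw [← pow_add, ← pow_add]
              congr 1
              omega
            linear_combination (-(qbinom q (m+1) b)) * hexp
          · rw [qbinom_of_lt (show m + 1 < b + 1 by omega),
              qbinom_of_lt (show m + 1 + 1 < b + 1 by omega),
              qbinom_of_lt (show m + 1 < b by omega)]
            ring

lemma factor (m : ℕ) :
    (∏ i ∈ Finset.range (m+1), (1 - PowerSeries.C ((1:K) * ((q:K)^4) ^ i) * X ^ (4:ℕ)))
      = ((∏ i ∈ Finset.range (m+1), (1 - PowerSeries.C ((1:K) * (q:K) ^ i) * X ^ (1:ℕ)))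
        * (∏ i ∈ Finset.range (m+1), (1 - PowerSeries.C (-((q:K) ^ i)) * X ^ (1:ℕ))))
        * (∏ i ∈ Finset.range (m+1),
            (1 - PowerSeries.C ((-1:K) * ((q:K)^2) ^ i) * X ^ (2:ℕ))) := by
  rw [← Finset.prod_mul_distrib, ← Finset.prod_mul_distrib]
  apply Finset.prod_congr rfl
  intro i _
  have h4 : PowerSeries.C ((1:K) * ((q:K)^4) ^ i) = (PowerSeries.C ((q:K) ^ i)) ^ 4 := by
    rw [one_mul, ← map_pow, ← pow_mul, ← pow_mul, Nat.mul_comm]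
  have h1 : PowerSeries.C ((1:K) * (q:K) ^ i) = PowerSeries.C ((q:K) ^ i) := by
    rw [one_mul]
  have hm : PowerSeries.C (-((q:K) ^ i)) = -(PowerSeries.C ((q:K) ^ i)) := by
    rw [map_neg]
  have h2 : PowerSeries.C ((-1:K) * ((q:K)^2) ^ i) = -((PowerSeries.C ((q:K) ^ i)) ^ 2) := by
    rw [neg_one_mul, map_neg, ← map_pow, ← pow_mul, ← pow_mul, Nat.mul_comm]
  rw [h4, h1, hm, h2]
  ring

lemma sum_if_dvd (d n : ℕ) (hd : 0 < d) (f : ℕ → K) :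
    ∑ l ∈ Finset.range (n+1), (if d ∣ l then f (l / d) else 0)
      = ∑ k ∈ Finset.range (n / d + 1), f k := by
  rw [← Finset.sum_filter]
  have himg : (Finset.range (n+1)).filter (fun l => d ∣ l)
      = (Finset.range (n / d + 1)).image (fun k => d * k) := by
    ext l
    simp only [Finset.mem_filter, Finset.mem_range, Finset.mem_image, Nat.lt_succ_iff]
    constructor
    · rintro ⟨hl, t, rfl⟩
      refine ⟨t, ?_, rfl⟩
      exact (Nat.le_div_iff_mul_le hd).2 (by rw [Nat.mul_comm]; omega)
    · rintro ⟨t, ht, rfl⟩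
      have h1 : t * d ≤ n := (Nat.le_div_iff_mul_le hd).1 ht
      exact ⟨by rw [Nat.mul_comm]; omega, ⟨t, rfl⟩⟩
  rw [himg, Finset.sum_image (fun a _ b _ h => Nat.eq_of_mul_eq_mul_left hd h)]
  apply Finset.sum_congr rfl
  intro k _
  rw [Nat.mul_div_cancel_left _ hd]

end Stmt16

open Stmt16 PowerSeries in
theorem stmt_16 (n m : ℕ) :
    ∑ k ∈ Finset.range (n / 4 + 1),
      q ^ Nat.choose (n - 4 * k) 2 * qbinom q (m + 1) (n - 4 * k) * qbinom (q ^ 4) (m + k) m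
    = ∑ k ∈ Finset.range (n / 2 + 1),
        (-1 : RatFunc ℚ) ^ k * qbinom q (m + n - 2 * k) m * qbinom (q ^ 2) (m + k) m := by
  have hq : Good q := good_q
  have hq2 : Good ((q:K) ^ 2) := good_q_pow 2 (by norm_num)
  have hq4 : Good ((q:K) ^ 4) := good_q_pow 4 (by norm_num)
  set mkA : PowerSeries K := PowerSeries.mk (fun j => q ^ (j.choose 2) * qbinom q (m+1) j)
    with hmkA
  set B : PowerSeries K := Sser q 1 1 m with hB
  set beta : PowerSeries K := Sser ((q:K)^2) (-1) 2 m with hbeta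
  set alpha : PowerSeries K := Sser ((q:K)^4) 1 4 m with halpha
  set P1 : PowerSeries K :=
    ∏ i ∈ Finset.range (m+1), (1 - PowerSeries.C ((1:K) * (q:K) ^ i) * X ^ (1:ℕ)) with hP1def
  set A : PowerSeries K :=
    ∏ i ∈ Finset.range (m+1), (1 - PowerSeries.C (-((q:K) ^ i)) * X ^ (1:ℕ)) with hAdef
  set P2 : PowerSeries K :=
    ∏ i ∈ Finset.range (m+1),
      (1 - PowerSeries.C ((-1:K) * ((q:K)^2) ^ i) * X ^ (2:ℕ)) with hP2def
  set P4 : PowerSeries K :=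
    ∏ i ∈ Finset.range (m+1),
      (1 - PowerSeries.C ((1:K) * ((q:K)^4) ^ i) * X ^ (4:ℕ)) with hP4def
  have hP1 : P1 * B = 1 := Sser_inv hq 1 1 (by norm_num) m
  have hP2 : P2 * beta = 1 := Sser_inv hq2 (-1) 2 (by norm_num) m
  have hP4 : P4 * alpha = 1 := Sser_inv hq4 1 4 (by norm_num) m
  have hA : A = mkA := Aser m
  have hfac : P4 = (P1 * A) * P2 := factor m
  have hmain : mkA * alpha = B * beta := by
    calc mkA * alpha = A * alpha * (P1 * B) * (P2 * beta) := by rw [hA, hP1, hP2, mul_one, mul_one]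
    _ = (B * beta) * (((P1 * A) * P2) * alpha) := by ring
    _ = (B * beta) * (P4 * alpha) := by rw [← hfac]
    _ = B * beta := by rw [hP4, mul_one]
  have hL : ∑ k ∈ Finset.range (n / 4 + 1),
      q ^ Nat.choose (n - 4 * k) 2 * qbinom q (m + 1) (n - 4 * k) * qbinom (q ^ 4) (m + k) m
      = PowerSeries.coeff n (mkA * alpha) := by
    rw [mul_comm, PowerSeries.coeff_mul, Finset.Nat.sum_antidiagonal_eq_sum_range_succ_mk]
    have hterm : ∀ l ∈ Finset.range (n+1),
        (PowerSeries.coeff l alpha) * (PowerSeries.coeff (n - l) mkA)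
          = (if 4 ∣ l then
              q ^ Nat.choose (n - 4 * (l/4)) 2 * qbinom q (m + 1) (n - 4 * (l/4))
                * qbinom (q ^ 4) (m + l/4) m
            else 0) := by
      intro l _
      rw [halpha, hmkA, Sser, PowerSeries.coeff_mk, PowerSeries.coeff_mk]
      split_ifs with h
      · obtain ⟨t, rfl⟩ := h
        rw [Nat.mul_div_cancel_left _ (by norm_num : (0:ℕ) < 4)]
        ring
      · ring
    rw [Finset.sum_congr rfl hterm, sum_if_dvd 4 n (by norm_num)
      (fun k => q ^ Nat.choose (n - 4 * k) 2 * qbinom q (m + 1) (n - 4 * k)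
        * qbinom (q ^ 4) (m + k) m)]
  have hR : ∑ k ∈ Finset.range (n / 2 + 1),
      (-1 : RatFunc ℚ) ^ k * qbinom q (m + n - 2 * k) m * qbinom (q ^ 2) (m + k) m
      = PowerSeries.coeff n (B * beta) := by
    rw [mul_comm, PowerSeries.coeff_mul, Finset.Nat.sum_antidiagonal_eq_sum_range_succ_mk]
    have hterm : ∀ l ∈ Finset.range (n+1),
        (PowerSeries.coeff l beta) * (PowerSeries.coeff (n - l) B)
          = (if 2 ∣ l then
              (-1 : K) ^ (l/2) * qbinom q (m + (n - 2 * (l/2))) m * qbinom (q ^ 2) (m + l/2) m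
            else 0) := by
      intro l _
      have hBco : PowerSeries.coeff (n - l) B = qbinom q (m + (n - l)) m := by
        rw [hB, Sser, PowerSeries.coeff_mk, if_pos (one_dvd _), Nat.div_one, one_pow, one_mul]
      rw [hBco, hbeta, Sser, PowerSeries.coeff_mk]
      split_ifs with h
      · obtain ⟨t, rfl⟩ := h
        rw [Nat.mul_div_cancel_left _ (by norm_num : (0:ℕ) < 2)]
        ring
      · ring
    rw [Finset.sum_congr rfl hterm, sum_if_dvd 2 n (by norm_num)
      (fun k => (-1 : K) ^ k * qbinom q (m + (n - 2 * k)) m * qbinom (q ^ 2) (m + k) m)]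
    apply Finset.sum_congr rfl
    intro k hk
    have hk' : k ≤ n / 2 := by
      simp only [Finset.mem_range] at hk; omega
    have : m + n - 2 * k = m + (n - 2 * k) := by omega
    rw [this]
  rw [hL, hR, hmain]
end

section
/- For all nonnegative integers n and m, the following identity holds in ℚ(q): Σ_{k=0}^{⌊n/4⌋} (−1)^k · q^{4·C(k,2)} · [m+n−4k choose m]_q · [m+1 choose k]_{q^4} = Σ_{k=0}^{⌊n/2⌋} q^{C(n−2k,2)+2·C(k,2)} · [m+1 choose n−2k]_q · [m+1 choose k]_{q^2}. -/
namespace Aux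

noncomputable def qfact (x : RatFunc ℚ) (n : ℕ) : RatFunc ℚ :=
  ∏ j ∈ Finset.range n, (1 - x ^ (j+1))

lemma one_sub_ne {x : RatFunc ℚ} (hx : ∀ j : ℕ, x ^ (j+1) ≠ 1) (j : ℕ) :
    (1 : RatFunc ℚ) - x ^ (j+1) ≠ 0 :=
  sub_ne_zero.mpr fun h => hx j h.symm

lemma qfact_ne_zero {x : RatFunc ℚ} (hx : ∀ j : ℕ, x ^ (j+1) ≠ 1) (n : ℕ) :
    qfact x n ≠ 0 :=
  Finset.prod_ne_zero_iff.mpr fun j _ => one_sub_ne hx j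

lemma qfact_succ (x : RatFunc ℚ) (n : ℕ) : qfact x (n+1) = qfact x n * (1 - x ^ (n+1)) :=
  Finset.prod_range_succ _ _

lemma qbinom_of_lt {x : RatFunc ℚ} {a b : ℕ} (h : a < b) : qbinom x a b = 0 := by
  rw [qbinom, if_neg (by omega)]

lemma qbinom_eq {x : RatFunc ℚ} (hx : ∀ j : ℕ, x ^ (j+1) ≠ 1) {a b : ℕ} (h : b ≤ a) :
    qbinom x a b = qfact x a / (qfact x b * qfact x (a-b)) := by
  have h1 : qfact x a = qfact x (a-b) * ∏ j ∈ Finset.range b, (1 - x ^ (a - b + j + 1)) := by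
    conv_lhs => rw [show a = (a-b) + b by omega]
    rw [qfact, Finset.prod_range_add]
    exact congrArg _ (Finset.prod_congr rfl fun j _ => by rw [add_assoc])
  rw [qbinom, if_pos h, Finset.prod_div_distrib,
    show (∏ j ∈ Finset.range b, (1 - x ^ (j + 1))) = qfact x b from rfl]
  rw [div_eq_div_iff (qfact_ne_zero hx b) (mul_ne_zero (qfact_ne_zero hx b) (qfact_ne_zero hx (a-b))), h1]
  show _ * (_ * _) = _ * qfact x b
  rw [qfact]; ring

end Aux

namespace Aux

private lemma faux1 {F Fb Fc xb xc : RatFunc ℚ} (hFb : Fb ≠ 0) (hFc : Fc ≠ 0)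
    (h1b : 1 - xb ≠ 0) (h1c : 1 - xc ≠ 0) :
    F * (1 - xb*xc) / ((Fb * (1-xb)) * (Fc * (1-xc))) =
      F / (Fb * (Fc * (1-xc))) + xb * (F / ((Fb*(1-xb)) * Fc)) := by
  field_simp; ring

private lemma faux2 {F Fb Fc xb xc : RatFunc ℚ} (hFb : Fb ≠ 0) (hFc : Fc ≠ 0)
    (h1b : 1 - xb ≠ 0) (h1c : 1 - xc ≠ 0) :
    F * (1 - xb*xc) / ((Fb * (1-xb)) * (Fc * (1-xc))) =
      xc * (F / (Fb * (Fc * (1-xc)))) + F / ((Fb*(1-xb)) * Fc) := by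
  field_simp; ring

lemma qbinom_self {x : RatFunc ℚ} (hx : ∀ j : ℕ, x ^ (j+1) ≠ 1) (a : ℕ) :
    qbinom x a a = 1 := by
  have h0 : qfact x 0 = 1 := by simp [qfact]
  rw [qbinom_eq hx le_rfl, Nat.sub_self, h0, mul_one, div_self (qfact_ne_zero hx a)]

lemma pascal₁ {x : RatFunc ℚ} (hx : ∀ j : ℕ, x ^ (j+1) ≠ 1) (a b : ℕ) :
    qbinom x (a+1) (b+1) = qbinom x a b + x^(b+1) * qbinom x a (b+1) := by
  rcases lt_trichotomy a b with h | rfl | h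
  · rw [qbinom_of_lt h, qbinom_of_lt (by omega), qbinom_of_lt (by omega)]
    ring
  · rw [qbinom_self hx, qbinom_self hx, qbinom_of_lt (by omega)]
    ring
  · obtain ⟨c, rfl⟩ : ∃ c, a = b + 1 + c := ⟨a - b - 1, by omega⟩
    rw [qbinom_eq hx (by omega), qbinom_eq hx (by omega), qbinom_eq hx (by omega),
      show b+1+c+1 - (b+1) = c+1 from by omega, show b+1+c - b = c+1 from by omega,
      show b+1+c - (b+1) = c from by omega, qfact_succ x (b+1+c), qfact_succ x b,
      qfact_succ x c, show b+1+c+1 = (b+1)+(c+1) from by omega, pow_add]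
    exact faux1 (qfact_ne_zero hx b) (qfact_ne_zero hx c) (one_sub_ne hx b) (one_sub_ne hx c)

lemma pascal₂ {x : RatFunc ℚ} (hx : ∀ j : ℕ, x ^ (j+1) ≠ 1) {a b : ℕ} (h : b ≤ a) :
    qbinom x (a+1) (b+1) = x^(a-b) * qbinom x a b + qbinom x a (b+1) := by
  rcases eq_or_lt_of_le h with rfl | h
  · rw [qbinom_self hx, qbinom_self hx, qbinom_of_lt (by omega), Nat.sub_self]
    ring
  · obtain ⟨c, rfl⟩ : ∃ c, a = b + 1 + c := ⟨a - b - 1, by omega⟩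
    rw [qbinom_eq hx (by omega), qbinom_eq hx (by omega), qbinom_eq hx (by omega),
      show b+1+c+1 - (b+1) = c+1 from by omega, show b+1+c - b = c+1 from by omega,
      show b+1+c - (b+1) = c from by omega, qfact_succ x (b+1+c), qfact_succ x b,
      qfact_succ x c, show b+1+c+1 = (b+1)+(c+1) from by omega, pow_add]
    exact faux2 (qfact_ne_zero hx b) (qfact_ne_zero hx c) (one_sub_ne hx b) (one_sub_ne hx c)

end Aux


namespace Aux
open PowerSeries

lemma sum_dvd {M : Type*} [AddCommMonoid M] {n d : ℕ} (hd : 0 < d) (f : ℕ → M)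
    (hf : ∀ i, i ≤ n → ¬ d ∣ i → f i = 0) :
    ∑ i ∈ Finset.range (n+1), f i = ∑ k ∈ Finset.range (n/d+1), f (d*k) := by
  rw [← Finset.sum_filter_of_ne (p := (d ∣ ·)) (fun i hi hne => by
    by_contra hdvd
    exact hne (hf i (Nat.lt_succ_iff.mp (Finset.mem_range.mp hi)) hdvd))]
  refine Finset.sum_nbij' (fun i => i / d) (fun k => d * k) ?_ ?_ ?_ ?_ ?_
  · intro a ha
    rw [Finset.mem_filter, Finset.mem_range] at ha
    rw [Finset.mem_range]
    have := Nat.div_le_div_right (c := d) (Nat.lt_succ_iff.mp ha.1)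
    omega
  · intro k hk
    rw [Finset.mem_range] at hk
    rw [Finset.mem_filter, Finset.mem_range]
    constructor
    · have : d * k ≤ d * (n/d) := Nat.mul_le_mul_left d (by omega)
      have h2 : d * (n / d) ≤ n := Nat.mul_div_le n d
      omega
    · exact Dvd.intro k rfl
  · intro a ha
    rw [Finset.mem_filter] at ha
    exact Nat.mul_div_cancel' ha.2
  · intro k _
    exact Nat.mul_div_cancel_left k hd
  · intro a ha
    rw [Finset.mem_filter] at ha
    rw [Nat.mul_div_cancel' ha.2]

lemma qbinom_zero (x : RatFunc ℚ) (a : ℕ) : qbinom x a 0 = 1 := by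
  rw [qbinom, if_pos (Nat.zero_le a), Finset.prod_range_zero]

lemma q_pow_ne_one {n : ℕ} (hn : n ≠ 0) : q ^ n ≠ 1 := by
  intro h
  rw [show q = algebraMap (Polynomial ℚ) _ Polynomial.X from (RatFunc.algebraMap_X).symm,
    ← map_pow, show (1 : RatFunc ℚ) = algebraMap (Polynomial ℚ) _ 1 from (map_one _).symm] at h
  have := congrArg Polynomial.natDegree (RatFunc.algebraMap_injective ℚ h)
  simp [Polynomial.natDegree_X_pow] at this
  exact hn this

lemma hq_pow (c : ℕ) (hc : c ≠ 0) : ∀ j : ℕ, (q ^ c) ^ (j+1) ≠ 1 := fun j => by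
  rw [← pow_mul]
  exact q_pow_ne_one (by positivity)

open PowerSeries

noncomputable def Wd (x s : RatFunc ℚ) (d m : ℕ) : PowerSeries (RatFunc ℚ) :=
  PowerSeries.mk fun l =>
    if d ∣ l then s ^ (l/d) * x ^ (Nat.choose (l/d) 2) * qbinom x (m+1) (l/d) else 0

noncomputable def Fser (m : ℕ) : PowerSeries (RatFunc ℚ) :=
  PowerSeries.mk fun l => qbinom q (m+l) m

lemma Wd_zero (x s : RatFunc ℚ) {d : ℕ} (hd : 0 < d) (hx : ∀ j : ℕ, x ^ (j+1) ≠ 1) :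
    Wd x s d 0 = 1 + C s * X ^ d := by
  ext l
  rw [Wd, coeff_mk, map_add, coeff_one, coeff_C_mul_X_pow]
  by_cases h1 : l = 0
  · subst h1
    rw [if_pos (dvd_zero d), Nat.zero_div, if_pos rfl, if_neg (by omega)]
    simp [qbinom_zero]
  · rw [if_neg h1]
    by_cases h2 : l = d
    · subst h2
      rw [if_pos dvd_rfl, Nat.div_self hd, if_pos rfl, qbinom_self hx]
      simp
    · rw [if_neg h2, zero_add]
      by_cases h3 : d ∣ l
      · have h5 : 2 ≤ l / d := by
          rcases h3 with ⟨k, rfl⟩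
          rcases Nat.lt_or_ge k 2 with hk | hk
          · interval_cases k <;> simp_all
          · rw [Nat.mul_div_cancel_left _ hd]; omega
        rw [if_pos h3, qbinom_of_lt (show 0+1 < l/d by omega), mul_zero]
        simp
      · rw [if_neg h3]
        simp

lemma Wd_rec (x s : RatFunc ℚ) {d : ℕ} (hd : 0 < d) (hx : ∀ j : ℕ, x ^ (j+1) ≠ 1) (m : ℕ) :
    Wd x s d (m+1) = (1 + C (s * x ^ (m+1)) * X ^ d) * Wd x s d m := by
  ext l
  rw [add_mul, one_mul, mul_assoc, map_add, coeff_C_mul, coeff_X_pow_mul']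
  rw [Wd, Wd, coeff_mk, coeff_mk]
  by_cases h3 : d ∣ l
  · rcases Nat.eq_zero_or_pos l with rfl | hl
    · rw [if_pos (dvd_zero d), if_pos (dvd_zero d), if_neg (by omega)]
      simp [qbinom_zero]
    · have hdl : d ≤ l := Nat.le_of_dvd hl h3
      obtain ⟨k, hk⟩ : ∃ k, l / d = k + 1 := ⟨l/d - 1, by
        have : 1 ≤ l / d := (Nat.one_le_div_iff hd).mpr hdl; omega⟩
      rw [if_pos h3, if_pos h3, if_pos hdl, coeff_mk,
        if_pos (Nat.dvd_sub h3 dvd_rfl),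
        show (l - d)/d = k from by
          rcases h3 with ⟨k', rfl⟩
          rw [Nat.mul_div_cancel_left _ hd] at hk
          subst hk
          rw [show d*(k+1) - d = d*k from by ring_nf; omega, Nat.mul_div_cancel_left _ hd],
        hk]
      by_cases hkm : k ≤ m + 1
      · rw [show m+1+1 = (m+1)+1 from rfl, pascal₂ hx hkm]
        have e : x ^ (Nat.choose (k+1) 2) * x ^ (m+1-k) = x ^ (m+1) * x ^ (Nat.choose k 2) := by
          rw [← pow_add, ← pow_add]
          congr 1
          have h1 : Nat.choose (k+1) 2 = Nat.choose k 2 + k := by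
            rw [Nat.choose_succ_succ]
            simp [Nat.choose_one_right]
            omega
          omega
        rw [pow_succ s k]
        linear_combination (s ^ k * s * qbinom x (m+1) k) * e
      · rw [qbinom_of_lt (by omega), qbinom_of_lt (by omega), qbinom_of_lt (by omega)]
        ring
  · rw [if_neg h3, if_neg h3, zero_add]
    by_cases h4 : d ≤ l
    · rw [if_pos h4, coeff_mk, if_neg (fun hc => h3 (by
        have := Nat.dvd_add hc (dvd_refl d)
        rwa [Nat.sub_add_cancel h4] at this)), mul_zero]
    · rw [if_neg h4, mul_zero]

lemma Fser_rec (m : ℕ) : Fser (m+1) * (1 - C (q ^ (m+1)) * X) = Fser m := by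
  have hq : ∀ j : ℕ, q ^ (j+1) ≠ 1 := fun j => q_pow_ne_one (by omega)
  ext l
  rw [mul_sub, mul_one, map_sub, ← mul_assoc, mul_comm (Fser (m+1)) (C (q^(m+1))),
    mul_assoc, coeff_C_mul, ← pow_one (X : PowerSeries (RatFunc ℚ)), coeff_mul_X_pow' _ 1, Fser, Fser, coeff_mk, coeff_mk]
  rcases Nat.eq_zero_or_pos l with rfl | hl
  · rw [if_neg (by omega)]
    simp [coeff_mk, qbinom_self hq]
  · obtain ⟨j, rfl⟩ : ∃ j, l = j + 1 := ⟨l - 1, by omega⟩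
    rw [if_pos (by omega), coeff_mk, Nat.add_sub_cancel,
      show m + 1 + (j+1) = (m+j+1)+1 from by omega,
      show m + (j+1) = m+j+1 from by omega,
      show m + 1 + j = m+j+1 from by omega,
      pascal₁ hq (m+j+1) m]
    ring


lemma Fser0 : Fser 0 * (1 - X) = 1 := by
  ext l
  rw [mul_sub, mul_one, map_sub, coeff_one, ← pow_one (X : PowerSeries (RatFunc ℚ)),
    coeff_mul_X_pow']
  rcases Nat.eq_zero_or_pos l with rfl | hl
  · rw [if_neg (by omega), if_pos rfl]
    simp [Fser, coeff_mk, qbinom_zero]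
  · rw [if_pos (by omega), if_neg (by omega)]
    simp [Fser, coeff_mk, qbinom_zero]

lemma one_sub_CX_ne (y : RatFunc ℚ) : (1 - C y * X : PowerSeries (RatFunc ℚ)) ≠ 0 := fun h => by
  have := congrArg (PowerSeries.constantCoeff (R := RatFunc ℚ)) h
  simp at this

lemma one_sub_X_ne : (1 - X : PowerSeries (RatFunc ℚ)) ≠ 0 := by
  have := one_sub_CX_ne 1
  rwa [map_one, one_mul] at this

lemma key (m : ℕ) : Wd (q^4) (-1) 4 m * Fser m = Wd q 1 1 m * Wd (q^2) 1 2 m := by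
  have hq1 : ∀ j : ℕ, q ^ (j+1) ≠ 1 := fun j => q_pow_ne_one (by omega)
  have hq2 := hq_pow 2 (by omega)
  have hq4 := hq_pow 4 (by omega)
  induction m with
  | zero =>
    rw [Wd_zero _ _ (by omega) hq4, Wd_zero _ _ (by omega) hq1, Wd_zero _ _ (by omega) hq2]
    apply mul_right_cancel₀ one_sub_X_ne
    calc (1 + C (-1) * X ^ 4) * Fser 0 * (1 - X)
        = (1 + C (-1) * X ^ 4) * (Fser 0 * (1 - X)) := by ring
      _ = 1 + C (-1) * X ^ 4 := by rw [Fser0, mul_one]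
      _ = (1 + C 1 * X ^ 1) * (1 + C 1 * X ^ 2) * (1 - X) := by
          simp only [map_one, map_neg]; ring
  | succ m ih =>
    have h4 : Wd (q^4) (-1) 4 (m+1) = (1 - (C (q^(m+1)))^4 * X^4) * Wd (q^4) (-1) 4 m := by
      rw [Wd_rec _ _ (by omega) hq4 m,
        show (-1 : RatFunc ℚ) * (q^4)^(m+1) = -((q^(m+1))^4) from by
          rw [← pow_mul, ← pow_mul]; ring_nf,
        map_neg, map_pow]
      ring
    have h1 : Wd q 1 1 (m+1) = (1 + C (q^(m+1)) * X^1) * Wd q 1 1 m := by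
      rw [Wd_rec _ _ (by omega) hq1 m, one_mul]
    have h2 : Wd (q^2) 1 2 (m+1) = (1 + (C (q^(m+1)))^2 * X^2) * Wd (q^2) 1 2 m := by
      rw [Wd_rec _ _ (by omega) hq2 m,
        show (1 : RatFunc ℚ) * (q^2)^(m+1) = (q^(m+1))^2 from by
          rw [← pow_mul, ← pow_mul]; ring_nf,
        map_pow]
    apply mul_right_cancel₀ (one_sub_CX_ne (q^(m+1)))
    calc Wd (q^4) (-1) 4 (m+1) * Fser (m+1) * (1 - C (q^(m+1)) * X)
        = Wd (q^4) (-1) 4 (m+1) * (Fser (m+1) * (1 - C (q^(m+1)) * X)) := by ring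
      _ = (1 - (C (q^(m+1)))^4 * X^4) * (Wd (q^4) (-1) 4 m * Fser m) := by
          rw [Fser_rec, h4]; ring
      _ = (1 - (C (q^(m+1)))^4 * X^4) * (Wd q 1 1 m * Wd (q^2) 1 2 m) := by rw [ih]
      _ = Wd q 1 1 (m+1) * Wd (q^2) 1 2 (m+1) * (1 - C (q^(m+1)) * X) := by
          rw [h1, h2]
          generalize (C (R := RatFunc ℚ)) (q^(m+1)) = c
          ring


end Aux

open Aux PowerSeries Finset

theorem stmt_17 (n m : ℕ) :
    ∑ k ∈ Finset.range (n / 4 + 1),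
      (-1 : RatFunc ℚ) ^ k * q ^ (4 * Nat.choose k 2) * qbinom q (m + n - 4 * k) m *
        qbinom (q ^ 4) (m + 1) k
    = ∑ k ∈ Finset.range (n / 2 + 1),
        q ^ (Nat.choose (n - 2 * k) 2 + 2 * Nat.choose k 2) * qbinom q (m + 1) (n - 2 * k) *
          qbinom (q ^ 2) (m + 1) k := by
  have h := congrArg (PowerSeries.coeff n) (key m)
  rw [coeff_mul, coeff_mul, Finset.Nat.sum_antidiagonal_eq_sum_range_succ_mk,
    Finset.Nat.sum_antidiagonal_eq_sum_range_succ_mk] at h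
  have hL : ∑ i ∈ Finset.range (n+1),
      (coeff i) (Wd (q^4) (-1) 4 m) * (coeff (n-i)) (Fser m)
      = ∑ k ∈ Finset.range (n / 4 + 1),
        (-1 : RatFunc ℚ) ^ k * q ^ (4 * Nat.choose k 2) * qbinom q (m + n - 4 * k) m *
          qbinom (q ^ 4) (m + 1) k := by
    rw [sum_dvd (show (0:ℕ) < 4 by omega) _ (fun i _ hnd => by
      rw [Wd, coeff_mk, if_neg hnd, zero_mul])]
    refine Finset.sum_congr rfl fun k hk => ?_
    have hk4 : 4 * k ≤ n := by
      rw [Finset.mem_range] at hk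
      have := (Nat.le_div_iff_mul_le (show 0 < 4 by omega)).mp (show k ≤ n/4 by omega)
      omega
    rw [Wd, Fser, coeff_mk, coeff_mk, if_pos ⟨k, rfl⟩,
      Nat.mul_div_cancel_left k (show 0 < 4 by omega),
      show m + (n - 4*k) = m + n - 4*k from by omega,
      show ((q:RatFunc ℚ)^4) ^ (Nat.choose k 2) = q ^ (4 * Nat.choose k 2) from by
        rw [← pow_mul]]
    ring
  have hR : ∑ i ∈ Finset.range (n+1),
      (coeff i) (Wd q 1 1 m) * (coeff (n-i)) (Wd (q^2) 1 2 m)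
      = ∑ k ∈ Finset.range (n / 2 + 1),
        q ^ (Nat.choose (n - 2 * k) 2 + 2 * Nat.choose k 2) * qbinom q (m + 1) (n - 2 * k) *
          qbinom (q ^ 2) (m + 1) k := by
    rw [← Finset.sum_range_reflect]
    simp only [Nat.add_sub_cancel]
    rw [sum_dvd (show (0:ℕ) < 2 by omega) _ (fun i hi hnd => by
      simp only [Wd, coeff_mk, show n - (n - i) = i from by omega]
      rw [if_neg hnd, mul_zero])]
    refine Finset.sum_congr rfl fun k hk => ?_
    have hk2 : 2 * k ≤ n := by
      rw [Finset.mem_range] at hk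
      have := (Nat.le_div_iff_mul_le (show 0 < 2 by omega)).mp (show k ≤ n/2 by omega)
      omega
    rw [show n - (n - 2*k) = 2*k from by omega, Wd, Wd, coeff_mk, coeff_mk,
      if_pos (one_dvd _), if_pos ⟨k, rfl⟩, Nat.div_one,
      Nat.mul_div_cancel_left k (show 0 < 2 by omega), one_pow, one_pow,
      show ((q:RatFunc ℚ)^2) ^ (Nat.choose k 2) = q ^ (2 * Nat.choose k 2) from by
        rw [← pow_mul],
      pow_add]
    ring
  rw [← hL, ← hR]
  exact h
end
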